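/- Let r₁, r₂, r₃, k₁, k₂, k₃, m₂₁, m₃₂ > 0 with r₁ > m₂₁. Define P₁* = (k₁/r₁)(r₁ − m₂₁), P₂* = (k₂/(2r₂))[r₂ − m₃₂ + sqrt((r₂ − m₃₂)² + (4/k₂)r₂m₂₁P₁*)], P₃* = (k₃/(2r₃))[r₃ + sqrt(r₃² + (4/k₃)r₃m₃₂P₂*)]. Then P₁*, P₂*, P₃* > 0 and (P₁*, P₂*, P₃*) is an equilibrium of the system P₁' = r₁P₁(1 − P₁/k₁) − m₂₁P₁, P₂' = r₂P₂(1 − P₂/k₂) − m₃₂P₂ + m₂₁P₁, P₃' = r₃P₃(1 − P₃/k₃) + m₃₂P₂. -/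

import Mathlib

lemma quad_aux (r k m c s : ℝ) (hr : r ≠ 0) (hk : k ≠ 0)
    (hs : s ^ 2 = (r - m) ^ 2 + (4 / k) * r * c) :
    r * ((k / (2 * r)) * (r - m + s)) * (1 - ((k / (2 * r)) * (r - m + s)) / k)
      - m * ((k / (2 * r)) * (r - m + s)) + c = 0 := by
  have hs' : k * s ^ 2 = k * (r - m) ^ 2 + 4 * r * c := by
    rw [hs]; field_simp
  field_simp
  linear_combination (-1 : ℝ) * hs'

/-- Model (n1) (chain `P₁ → P₂ → P₃`): the explicit triple is a strictly
positive coexistence equilibrium under the single condition `r₁ > m₂₁`. -/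
theorem modeln1_coexistence_equilibrium
    (r₁ r₂ r₃ k₁ k₂ k₃ m₂₁ m₃₂ : ℝ)
    (hr₁ : 0 < r₁) (hr₂ : 0 < r₂) (hr₃ : 0 < r₃)
    (hk₁ : 0 < k₁) (hk₂ : 0 < k₂) (hk₃ : 0 < k₃)
    (hm₂₁ : 0 < m₂₁) (hm₃₂ : 0 < m₃₂)
    (hfeas : m₂₁ < r₁)
    (P₁ P₂ P₃ : ℝ)
    (hP₁ : P₁ = (k₁ / r₁) * (r₁ - m₂₁))
    (hP₂ : P₂ = (k₂ / (2 * r₂)) *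
      (r₂ - m₃₂ + Real.sqrt ((r₂ - m₃₂) ^ 2 + (4 / k₂) * r₂ * m₂₁ * P₁)))
    (hP₃ : P₃ = (k₃ / (2 * r₃)) *
      (r₃ + Real.sqrt (r₃ ^ 2 + (4 / k₃) * r₃ * m₃₂ * P₂))) :
    0 < P₁ ∧ 0 < P₂ ∧ 0 < P₃ ∧
    r₁ * P₁ * (1 - P₁ / k₁) - m₂₁ * P₁ = 0 ∧
    r₂ * P₂ * (1 - P₂ / k₂) - m₃₂ * P₂ + m₂₁ * P₁ = 0 ∧
    r₃ * P₃ * (1 - P₃ / k₃) + m₃₂ * P₂ = 0 := by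
  have hP₁pos : 0 < P₁ := by
    rw [hP₁]
    have : 0 < r₁ - m₂₁ := by linarith
    positivity
  have hD₂pos : 0 < (r₂ - m₃₂) ^ 2 + (4 / k₂) * r₂ * m₂₁ * P₁ := by
    have h4 : 0 < (4 / k₂) * r₂ * m₂₁ * P₁ := by positivity
    nlinarith [sq_nonneg (r₂ - m₃₂)]
  have hs₂ : Real.sqrt ((r₂ - m₃₂) ^ 2 + (4 / k₂) * r₂ * m₂₁ * P₁) ^ 2
      = (r₂ - m₃₂) ^ 2 + (4 / k₂) * r₂ * m₂₁ * P₁ := Real.sq_sqrt hD₂pos.le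
  have hs₂pos : 0 < Real.sqrt ((r₂ - m₃₂) ^ 2 + (4 / k₂) * r₂ * m₂₁ * P₁) :=
    Real.sqrt_pos.mpr hD₂pos
  have hgt₂ : 0 < r₂ - m₃₂ + Real.sqrt ((r₂ - m₃₂) ^ 2 + (4 / k₂) * r₂ * m₂₁ * P₁) := by
    nlinarith [hs₂, hs₂pos, mul_pos (mul_pos (mul_pos (div_pos (by norm_num : (0:ℝ) < 4) hk₂) hr₂) hm₂₁) hP₁pos]
  have hP₂pos : 0 < P₂ := by
    rw [hP₂]; positivity
  have hD₃pos : 0 < r₃ ^ 2 + (4 / k₃) * r₃ * m₃₂ * P₂ := by positivity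
  have hs₃ : Real.sqrt (r₃ ^ 2 + (4 / k₃) * r₃ * m₃₂ * P₂) ^ 2
      = r₃ ^ 2 + (4 / k₃) * r₃ * m₃₂ * P₂ := Real.sq_sqrt hD₃pos.le
  have hs₃pos : 0 < Real.sqrt (r₃ ^ 2 + (4 / k₃) * r₃ * m₃₂ * P₂) :=
    Real.sqrt_pos.mpr hD₃pos
  have hP₃pos : 0 < P₃ := by
    rw [hP₃]; positivity
  refine ⟨hP₁pos, hP₂pos, hP₃pos, ?_, ?_, ?_⟩
  · rw [hP₁]; field_simp; ring
  · rw [hP₂]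
    exact quad_aux r₂ k₂ m₃₂ (m₂₁ * P₁) _ hr₂.ne' hk₂.ne' (by rw [hs₂]; ring)
  · have := quad_aux r₃ k₃ 0 (m₃₂ * P₂) _ hr₃.ne' hk₃.ne' (by rw [sub_zero, hs₃]; ring)
    rw [hP₃]
    simpa using this
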